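/- arXiv:1401.0987 — 5 statements merged into one kernel-verified Lean document; each statement's English description precedes it below -/
import Mathlib

section
/- Let d ≥ 1, J ≥ 1, σ > 0, let x_1, …, x_J ∈ ℝ^d be fixed vectors, let α = (α_1, …, α_J) ∈ ℝ^J satisfy ‖α‖_1 ≤ 1, and define f : ℝ^d → ℝ by f(x) = Σ_{j=1}^J α_j · exp(−‖x − x_j‖²/(2σ²)). Then for every natural number K with K ≤ σ², one has ‖f‖_K ≤ 1; that is, for every multi-index k = (k_1, …, k_d) with |k| = k_1 + … + k_d ≤ K and every x ∈ [−1,1]^d, |D^k f(x)| ≤ 1. -/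
open scoped BigOperators
open Polynomial
open scoped ContDiff Nat

/-- Partial derivative of `f` in the `i`-th coordinate direction. -/
noncomputable def pderiv' {d : ℕ} (i : Fin d) (f : (Fin d → ℝ) → ℝ) :
    (Fin d → ℝ) → ℝ :=
  fun x => fderiv ℝ f x (Pi.single i 1)

/-- Mixed partial derivative `D^k = D_1^{k_1} ⋯ D_d^{k_d}` for a multi-index `k`. -/
noncomputable def mixedPartial {d : ℕ} (k : Fin d → ℕ) (f : (Fin d → ℝ) → ℝ) :
    (Fin d → ℝ) → ℝ :=
  (List.finRange d).foldr (fun i g => (pderiv' i)^[k i] g) f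


noncomputable def gauss : ℝ → ℝ := fun y => Real.exp (-(y ^ 2 / 2))
noncomputable def G (n : ℕ) : ℝ → ℝ := deriv^[n] gauss

lemma G_eq (n : ℕ) (x : ℝ) :
    G n x = (-1 : ℝ) ^ n * aeval x (hermite n) * gauss x :=
  Polynomial.deriv_gaussian_eq_hermite_mul_gaussian n x

lemma contDiff_gauss : ContDiff ℝ ∞ gauss := by
  exact Real.contDiff_exp.comp (((contDiff_id.pow 2).div_const 2).neg)

lemma contDiff_G (n : ℕ) : ContDiff ℝ ∞ (G n) :=
  ContDiff.iterate_deriv n contDiff_gauss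

lemma derivative_hermite (n : ℕ) :
    derivative (hermite n) = (n : Polynomial ℤ) * hermite (n - 1) := by
  induction n with
  | zero => simp [hermite_zero]
  | succ n ih =>
    rw [hermite_succ, derivative_sub, derivative_mul, derivative_X, one_mul, ih, derivative_mul,
      derivative_natCast, zero_mul, zero_add]
    cases n with
    | zero => simp [hermite_zero]
    | succ m =>
      simp only [Nat.add_sub_cancel]
      rw [hermite_succ m]
      push_cast
      ring

lemma hasDerivAt_gauss (x : ℝ) : HasDerivAt gauss (-x * gauss x) x := by
  have h1 : HasDerivAt (fun y : ℝ => -(y ^ 2 / 2)) (-x) x := by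
    have := ((hasDerivAt_pow 2 x).div_const 2).neg
    exact this.congr_deriv (by push_cast; ring)
  rw [show gauss = fun y => Real.exp (-(y ^ 2 / 2)) from rfl]
  simpa [mul_comm] using h1.exp

lemma hasDerivAt_G (n : ℕ) (x : ℝ) : HasDerivAt (G n) (G (n + 1) x) x := by
  have hpoly : ∀ m : ℕ, HasDerivAt (fun y : ℝ => ((-1:ℝ)^m * aeval y (hermite m) * gauss y))
      ((-1:ℝ)^(m+1) * aeval x (hermite (m+1)) * gauss x) x := by
    intro m
    have h1 : HasDerivAt (fun y : ℝ => aeval y (hermite m))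
        (aeval x (derivative (hermite m))) x := Polynomial.hasDerivAt_aeval (q := hermite m) x
    have h2 := ((h1.mul (hasDerivAt_gauss x)).const_mul ((-1:ℝ)^m))
    convert h2 using 1
    · rfl
    · rfl
    · funext y; rw [Pi.mul_apply]; ring
    · rw [hermite_succ, map_sub, map_mul, aeval_X]; ring
  have he : G n = fun y => (-1:ℝ)^n * aeval y (hermite n) * gauss y := by
    funext y; exact G_eq n y
  rw [he]
  have := hpoly n
  rw [← G_eq (n+1) x] at this
  exact this

lemma G_recurrence (n : ℕ) (x : ℝ) :
    G (n + 2) x = -x * G (n + 1) x - ((n : ℝ) + 1) * G n x := by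
  rw [G_eq, G_eq, G_eq]
  rw [hermite_succ (n+1), map_sub, map_mul, aeval_X, derivative_hermite, Nat.add_sub_cancel,
    map_mul]
  simp only [map_add, map_one, map_natCast]
  push_cast
  ring

lemma energy_le (n : ℕ) (x : ℝ) :
    (G (n + 1) x) ^ 2 + ((n : ℝ) + 1) * (G n x) ^ 2 ≤
      (G (n + 1) 0) ^ 2 + ((n : ℝ) + 1) * (G n 0) ^ 2 := by
  set E : ℝ → ℝ := fun t => (G (n + 1) t) ^ 2 + ((n : ℝ) + 1) * (G n t) ^ 2 with hE
  have hderiv : ∀ t : ℝ, HasDerivAt E (-2 * t * (G (n + 1) t) ^ 2) t := by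
    intro t
    have h1 := ((hasDerivAt_G (n+1) t).pow 2)
    have h2 := ((hasDerivAt_G n t).pow 2).const_mul ((n : ℝ) + 1)
    have h3 := h1.add h2
    convert h3 using 1
    · rfl
    · rfl
    · rfl
    rw [G_recurrence n t]
    push_cast
    ring
  have hcont : Continuous E := by
    have := fun t => (hderiv t).differentiableAt
    exact Differentiable.continuous (fun t => (hderiv t).differentiableAt)
  rcases le_total 0 x with hx | hx
  · have : AntitoneOn E (Set.Icc 0 x) := by
      apply antitoneOn_of_deriv_nonpos (convex_Icc 0 x) (hcont.continuousOn)
      · intro t ht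
        exact (hderiv t).differentiableAt.differentiableWithinAt
      · intro t ht
        rw [(hderiv t).deriv]
        rw [interior_Icc] at ht
        have ht0 : (0:ℝ) ≤ t := le_of_lt ht.1
        nlinarith [sq_nonneg (G (n+1) t)]
    exact this (Set.left_mem_Icc.2 hx) (Set.right_mem_Icc.2 hx) hx
  · have : MonotoneOn E (Set.Icc x 0) := by
      apply monotoneOn_of_deriv_nonneg (convex_Icc x 0) (hcont.continuousOn)
      · intro t ht
        exact (hderiv t).differentiableAt.differentiableWithinAt
      · intro t ht
        rw [(hderiv t).deriv]
        rw [interior_Icc] at ht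
        have ht0 : t ≤ 0 := le_of_lt ht.2
        nlinarith [sq_nonneg (G (n+1) t)]
    exact this (Set.left_mem_Icc.2 hx) (Set.right_mem_Icc.2 hx) hx

lemma aeval_zero_hermite (m : ℕ) :
    aeval (0:ℝ) (hermite m) = (((hermite m).coeff 0 : ℤ) : ℝ) := by
  rw [aeval_def, eval₂_at_zero]
  simp

lemma G_zero_sq (m : ℕ) : (G m 0) ^ 2 = (((hermite m).coeff 0 : ℤ) : ℝ) ^ 2 := by
  rw [G_eq, aeval_zero_hermite]
  have h1 : gauss 0 = 1 := by simp [gauss]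
  rw [h1, mul_one, mul_pow]
  have h2 : ((-1:ℝ) ^ m) ^ 2 = 1 := by
    rw [← pow_mul, mul_comm, pow_mul]
    norm_num
  rw [h2, one_mul]

lemma df_even (m : ℕ) : (2 * m - 1)‼ ≤ (2 * m) ^ m := by
  induction m with
  | zero => simp
  | succ m ih =>
    have h1 : 2 * (m + 1) - 1 = 2 * m + 1 := by omega
    rw [h1, Nat.doubleFactorial_add_one]
    calc (2 * m + 1) * (2 * m - 1)‼ ≤ (2 * (m+1)) * (2 * m) ^ m :=
          Nat.mul_le_mul (by omega) ih
      _ ≤ (2 * (m+1)) * (2 * (m+1)) ^ m :=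
          Nat.mul_le_mul_left _ (Nat.pow_le_pow_left (by omega) m)
      _ = (2 * (m+1)) ^ (m+1) := by rw [pow_succ]; ring

lemma df_odd (m : ℕ) : (2 * m + 1)‼ ≤ (2 * m + 1) ^ (m + 1) := by
  induction m with
  | zero => simp
  | succ m ih =>
    have h1 : 2 * (m + 1) + 1 = (2 * m + 1) + 2 := by omega
    rw [h1, Nat.doubleFactorial_add_two]
    calc (2 * m + 1 + 2) * (2 * m + 1)‼ ≤ (2 * m + 3) * (2 * m + 1) ^ (m + 1) :=
          Nat.mul_le_mul (by omega) ih
      _ ≤ (2 * m + 3) * (2 * m + 3) ^ (m + 1) :=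
          Nat.mul_le_mul_left _ (Nat.pow_le_pow_left (by omega) _)
      _ = (2 * m + 3) ^ (m + 2) := by rw [pow_succ]; ring

lemma sq_of_sign (s : ℕ) (a : ℤ) : ((-1) ^ s * a) ^ 2 = a ^ 2 := by
  rw [mul_pow, ← pow_mul, mul_comm s 2, pow_mul]
  norm_num

lemma coeff_sq_even {n : ℕ} (hev : Even n) :
    ((hermite n).coeff 0) ^ 2 = (((n - 1)‼ : ℕ) : ℤ) ^ 2 := by
  rw [coeff_hermite_of_even_add (by simpa using hev), Nat.choose_zero_right, Nat.cast_one,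
    mul_one, Nat.sub_zero]
  exact sq_of_sign _ _

lemma G_zero_sq_even {n : ℕ} (hev : Even n) :
    (G n 0) ^ 2 = (((n - 1)‼ : ℕ) : ℝ) ^ 2 := by
  rw [G_zero_sq]
  calc (((hermite n).coeff 0 : ℤ) : ℝ) ^ 2 = ((((hermite n).coeff 0) ^ 2 : ℤ) : ℝ) := by
        push_cast; ring
    _ = (((((n - 1)‼ : ℕ) : ℤ) ^ 2 : ℤ) : ℝ) := by rw [coeff_sq_even hev]
    _ = (((n - 1)‼ : ℕ) : ℝ) ^ 2 := by push_cast; ring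

lemma G_zero_sq_odd {n : ℕ} (ho : Odd n) : (G n 0) ^ 2 = 0 := by
  rw [G_zero_sq, coeff_hermite_of_odd_add (by simpa using ho)]
  simp

lemma G_sq_le (n : ℕ) (x : ℝ) : (G n x) ^ 2 ≤ (n : ℝ) ^ n := by
  have hpos : (0:ℝ) < (n:ℝ) + 1 := by positivity
  have key : ((n:ℝ) + 1) * (G n x) ^ 2 ≤ ((n:ℝ) + 1) * (n:ℝ) ^ n := by
    have h1 : ((n:ℝ) + 1) * (G n x) ^ 2 ≤ (G (n+1) 0) ^ 2 + ((n:ℝ) + 1) * (G n 0) ^ 2 :=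
      le_trans (by nlinarith [sq_nonneg (G (n+1) x)]) (energy_le n x)
    refine h1.trans ?_
    rcases Nat.even_or_odd n with he | ho
    · obtain ⟨m, hm⟩ := id he
      have hodd : (G (n+1) 0) ^ 2 = 0 := G_zero_sq_odd (by exact Even.add_one he)
      have heven : (G n 0) ^ 2 ≤ (n:ℝ) ^ n := by
        rw [G_zero_sq_even he]
        have hnat : ((n - 1)‼) ^ 2 ≤ n ^ n := by
          have h2 : n - 1 = 2 * m - 1 := by omega
          have h3 : n = 2 * m := by omega
          rw [h2, h3]
          calc ((2 * m - 1)‼) ^ 2 ≤ ((2 * m) ^ m) ^ 2 := Nat.pow_le_pow_left (df_even m) 2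
            _ = (2 * m) ^ (2 * m) := by rw [← pow_mul, mul_comm m 2]
        calc (((n - 1)‼ : ℕ) : ℝ) ^ 2 = ((((n - 1)‼) ^ 2 : ℕ) : ℝ) := by push_cast; ring
          _ ≤ ((n ^ n : ℕ) : ℝ) := by exact_mod_cast hnat
          _ = (n : ℝ) ^ n := by push_cast; ring
      nlinarith
    · obtain ⟨m, hm⟩ := id ho
      have hzero : (G n 0) ^ 2 = 0 := G_zero_sq_odd ho
      have hnext : (G (n+1) 0) ^ 2 ≤ (n:ℝ) ^ (n+1) := by
        rw [G_zero_sq_even (by exact ho.add_one)]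
        have hnat : ((n + 1 - 1)‼) ^ 2 ≤ n ^ (n + 1) := by
          have h3 : n + 1 - 1 = 2 * m + 1 := by omega
          rw [h3, hm]
          calc ((2 * m + 1)‼) ^ 2 ≤ ((2 * m + 1) ^ (m + 1)) ^ 2 :=
                Nat.pow_le_pow_left (df_odd m) 2
            _ = (2 * m + 1) ^ (2 * m + 1 + 1) := by rw [← pow_mul]; ring_nf
        calc (((n + 1 - 1)‼ : ℕ) : ℝ) ^ 2 = ((((n + 1 - 1)‼) ^ 2 : ℕ) : ℝ) := by push_cast; ring
          _ ≤ ((n ^ (n+1) : ℕ) : ℝ) := by exact_mod_cast hnat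
          _ = (n : ℝ) ^ (n+1) := by push_cast; ring
      have hstep : (n:ℝ) ^ (n+1) = (n:ℝ) * (n:ℝ) ^ n := by rw [pow_succ]; ring
      nlinarith [pow_nonneg (Nat.cast_nonneg n : (0:ℝ) ≤ (n:ℝ)) n]
  exact le_of_mul_le_mul_left key hpos

lemma deriv_scaled (c σ : ℝ) (hσ : σ ≠ 0) (m : ℕ) :
    deriv^[m] (fun t => gauss ((t - c) / σ)) = fun t => (1 / σ) ^ m * G m ((t - c) / σ) := by
  induction m with
  | zero => funext t; simp [G]
  | succ m ih =>
    rw [Function.iterate_succ_apply', ih]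
    funext t
    have h1 : HasDerivAt (fun t : ℝ => (t - c) / σ) (1 / σ) t := by
      simpa using ((hasDerivAt_id t).sub_const c).div_const σ
    have h2 : HasDerivAt (fun t => G m ((t - c) / σ)) (G (m + 1) ((t - c) / σ) * (1 / σ)) t :=
      (hasDerivAt_G m ((t - c) / σ)).comp t h1
    have h3 := h2.const_mul ((1 / σ) ^ m)
    rw [h3.deriv]
    ring

lemma abs_G_le {n : ℕ} {σ : ℝ} (hσ : 0 < σ) (hn : (n : ℝ) ≤ σ ^ 2) (u : ℝ) :
    |G n u| ≤ σ ^ n := by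
  have h1 : (G n u) ^ 2 ≤ (σ ^ n) ^ 2 := by
    refine (G_sq_le n u).trans ?_
    calc (n:ℝ) ^ n ≤ (σ ^ 2) ^ n := pow_le_pow_left₀ (Nat.cast_nonneg n) hn n
      _ = (σ ^ n) ^ 2 := by rw [← pow_mul, ← pow_mul, mul_comm]
  have h2 := Real.sqrt_le_sqrt h1
  rwa [Real.sqrt_sq_eq_abs, Real.sqrt_sq (by positivity)] at h2

lemma pderiv_sum_prod {d J : ℕ} (α : Fin J → ℝ) (w : Fin J → Fin d → ℝ → ℝ)
    (hw : ∀ j i, ContDiff ℝ ∞ (w j i)) (a : Fin d) :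
    pderiv' a (fun x => ∑ j, α j * ∏ i, w j i (x i)) =
      fun x => ∑ j, α j * ∏ i, Function.update (w j) a (deriv (w j a)) i (x i) := by
  funext x
  have hfact : ∀ (j : Fin J) (i : Fin d),
      HasFDerivAt (fun x : Fin d → ℝ => w j i (x i))
        ((deriv (w j i) (x i)) • (ContinuousLinearMap.proj i : (Fin d → ℝ) →L[ℝ] ℝ)) x := by
    intro j i
    have hd : HasDerivAt (w j i) (deriv (w j i) (x i)) (x i) :=
      (((hw j i).differentiable (by simp)) (x i)).hasDerivAt
    have hp : HasFDerivAt (fun x : Fin d → ℝ => x i)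
        (ContinuousLinearMap.proj i : (Fin d → ℝ) →L[ℝ] ℝ) x :=
      (ContinuousLinearMap.proj i : (Fin d → ℝ) →L[ℝ] ℝ).hasFDerivAt
    exact hd.comp_hasFDerivAt x hp
  have hprod : ∀ j : Fin J, HasFDerivAt (fun x : Fin d → ℝ => ∏ i, w j i (x i))
      (∑ i, (∏ l ∈ Finset.univ.erase i, w j l (x l)) •
        ((deriv (w j i) (x i)) • (ContinuousLinearMap.proj i : (Fin d → ℝ) →L[ℝ] ℝ))) x :=
    fun j => HasFDerivAt.finset_prod (fun i _ => hfact j i)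
  have hsum : HasFDerivAt (fun x : Fin d → ℝ => ∑ j, α j * ∏ i, w j i (x i))
      (∑ j, α j • (∑ i, (∏ l ∈ Finset.univ.erase i, w j l (x l)) •
        ((deriv (w j i) (x i)) • (ContinuousLinearMap.proj i : (Fin d → ℝ) →L[ℝ] ℝ)))) x :=
    HasFDerivAt.fun_sum (fun j _ => (hprod j).const_mul (α j))
  show fderiv ℝ _ x (Pi.single a 1) = _
  rw [hsum.fderiv]
  rw [ContinuousLinearMap.sum_apply]
  refine Finset.sum_congr rfl (fun j _ => ?_)
  rw [ContinuousLinearMap.smul_apply, ContinuousLinearMap.sum_apply, smul_eq_mul]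
  congr 1
  have hterm : ∀ i : Fin d,
      ((∏ l ∈ Finset.univ.erase i, w j l (x l)) •
        ((deriv (w j i) (x i)) • (ContinuousLinearMap.proj i : (Fin d → ℝ) →L[ℝ] ℝ)))
          (Pi.single a 1) =
      (∏ l ∈ Finset.univ.erase i, w j l (x l)) * (deriv (w j i) (x i)) *
        (if i = a then 1 else 0) := by
    intro i
    rw [ContinuousLinearMap.smul_apply, ContinuousLinearMap.smul_apply,
      ContinuousLinearMap.proj_apply, smul_eq_mul, smul_eq_mul, Pi.single_apply, mul_assoc]
  rw [Finset.sum_congr rfl (fun i _ => hterm i)]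
  have hL : (∑ i, (∏ l ∈ Finset.univ.erase i, w j l (x l)) * (deriv (w j i) (x i)) *
      (if i = a then 1 else 0)) =
      (∏ l ∈ Finset.univ.erase a, w j l (x l)) * deriv (w j a) (x a) := by
    rw [Finset.sum_eq_single a (fun b _ hb => by simp [hb]) (fun h => absurd (Finset.mem_univ a) h)]
    simp
  rw [hL]
  have hR : (∏ i, Function.update (w j) a (deriv (w j a)) i (x i)) =
      deriv (w j a) (x a) * ∏ l ∈ Finset.univ.erase a, w j l (x l) := by
    rw [← Finset.mul_prod_erase Finset.univ
      (fun i => Function.update (w j) a (deriv (w j a)) i (x i)) (Finset.mem_univ a)]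
    congr 1
    · rw [Function.update_self]
    · exact Finset.prod_congr rfl
        (fun l hl => by rw [Function.update_of_ne (Finset.ne_of_mem_erase hl)])
  rw [hR]
  ring

lemma pderiv_iter {d J : ℕ} (α : Fin J → ℝ) (w : Fin J → Fin d → ℝ → ℝ)
    (hw : ∀ j i, ContDiff ℝ ∞ (w j i)) (a : Fin d) (m : ℕ) :
    (pderiv' a)^[m] (fun x => ∑ j, α j * ∏ i, w j i (x i)) =
      fun x => ∑ j, α j * ∏ i, Function.update (w j) a (deriv^[m] (w j a)) i (x i) := by
  induction m with
  | zero =>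
    simp only [Function.iterate_zero_apply, Function.update_eq_self]
  | succ m ih =>
    rw [Function.iterate_succ_apply', ih]
    have hw' : ∀ j i, ContDiff ℝ ∞ (Function.update (w j) a (deriv^[m] (w j a)) i) := by
      intro j i
      rcases eq_or_ne i a with rfl | hne
      · rw [Function.update_self]
        exact ContDiff.iterate_deriv m (hw j i)
      · rw [Function.update_of_ne hne]
        exact hw j i
    rw [pderiv_sum_prod α _ hw' a]
    funext x
    refine Finset.sum_congr rfl (fun j _ => ?_)
    congr 1
    refine Finset.prod_congr rfl (fun i _ => ?_)
    congr 1
    rw [Function.update_self, Function.update_idem, ← Function.iterate_succ_apply' deriv m (w j a)]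

lemma foldr_mixed {d J : ℕ} (α : Fin J → ℝ) (k : Fin d → ℕ) (w : Fin J → Fin d → ℝ → ℝ)
    (hw : ∀ j i, ContDiff ℝ ∞ (w j i)) (L : List (Fin d)) (hL : L.Nodup) :
    L.foldr (fun i g => (pderiv' i)^[k i] g) (fun x => ∑ j, α j * ∏ i, w j i (x i)) =
      fun x => ∑ j, α j * ∏ i,
        (if i ∈ L then deriv^[k i] (w j i) else w j i) (x i) := by
  induction L with
  | nil => simp
  | cons a L ihL =>
    have hnd := hL
    rw [List.nodup_cons] at hnd
    rw [List.foldr_cons, ihL hnd.2]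
    set w' : Fin J → Fin d → ℝ → ℝ :=
      fun j i => if i ∈ L then deriv^[k i] (w j i) else w j i with hw'def
    have hw' : ∀ j i, ContDiff ℝ ∞ (w' j i) := by
      intro j i
      simp only [hw'def]
      split
      · exact ContDiff.iterate_deriv _ (hw j i)
      · exact hw j i
    rw [pderiv_iter α w' hw' a (k a)]
    funext x
    refine Finset.sum_congr rfl (fun j _ => ?_)
    congr 1
    refine Finset.prod_congr rfl (fun i _ => ?_)
    congr 1
    rcases eq_or_ne i a with rfl | hne
    · rw [Function.update_self]
      have hia : i ∉ L := hnd.1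
      simp [hw'def, hia]
    · rw [Function.update_of_ne hne]
      simp only [hw'def, List.mem_cons]
      rcases Decidable.em (i ∈ L) with h | h
      · rw [if_pos h, if_pos (Or.inr h)]
      · rw [if_neg h, if_neg (by tauto)]

/-- a linear combination `f` of Gaussian kernels with `ℓ¹`-bounded
coefficients satisfies `‖f‖_K ≤ 1` whenever `K ≤ σ²`. -/
theorem gaussian_combination_smoothness
    (d J : ℕ) (hd : 1 ≤ d) (hJ : 1 ≤ J) (σ : ℝ) (hσ : 0 < σ)
    (xs : Fin J → (Fin d → ℝ)) (α : Fin J → ℝ) (hα : (∑ j, |α j|) ≤ 1)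
    (f : (Fin d → ℝ) → ℝ)
    (hf : f = fun x => ∑ j, α j *
      Real.exp (-(∑ i, (x i - xs j i) ^ 2) / (2 * σ ^ 2)))
    (K : ℕ) (hK : (K : ℝ) ≤ σ ^ 2) :
    ∀ k : Fin d → ℕ, (∑ i, k i) ≤ K →
      ∀ x : Fin d → ℝ, (∀ i, x i ∈ Set.Icc (-1 : ℝ) 1) →
        |mixedPartial k f x| ≤ 1 := by
  unfold mixedPartial
  intro k hk x _
  have hσ' : σ ≠ 0 := ne_of_gt hσ
  set w : Fin J → Fin d → ℝ → ℝ := fun j i t => gauss ((t - xs j i) / σ) with hwdef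
  have hw : ∀ j i, ContDiff ℝ ∞ (w j i) :=
    fun j i => contDiff_gauss.comp ((contDiff_id.sub contDiff_const).div_const σ)
  have hftensor : f = fun x => ∑ j, α j * ∏ i, w j i (x i) := by
    rw [hf]
    funext y
    refine Finset.sum_congr rfl (fun j _ => ?_)
    congr 1
    have h1 : ∀ i : Fin d, w j i (y i) = Real.exp (-(((y i - xs j i) / σ) ^ 2 / 2)) := by
      intro i; rfl
    have h2 : ∑ i, -(((y i - xs j i) / σ) ^ 2 / 2) = -(∑ i, (y i - xs j i) ^ 2) / (2 * σ ^ 2) := by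
      rw [neg_div, Finset.sum_div, ← Finset.sum_neg_distrib]
      refine Finset.sum_congr rfl (fun i _ => ?_)
      rw [div_pow, div_div, mul_comm]
    rw [← h2, Real.exp_sum]
    exact Finset.prod_congr rfl (fun i _ => (h1 i).symm)
  rw [hftensor, foldr_mixed α k w hw (List.finRange d) (List.nodup_finRange d)]
  simp only [List.mem_finRange, if_true]
  have hterm : ∀ (j : Fin J) (i : Fin d),
      |deriv^[k i] (w j i) (x i)| ≤ 1 := by
    intro j i
    have hscal : deriv^[k i] (w j i) = fun t => (1 / σ) ^ (k i) * G (k i) ((t - xs j i) / σ) :=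
      deriv_scaled (xs j i) σ hσ' (k i)
    rw [hscal]
    have hki : ((k i : ℕ) : ℝ) ≤ σ ^ 2 := by
      have h1 : k i ≤ K := le_trans (Finset.single_le_sum (fun i _ => Nat.zero_le (k i))
        (Finset.mem_univ i)) hk
      calc ((k i : ℕ) : ℝ) ≤ (K : ℝ) := by exact_mod_cast h1
        _ ≤ σ ^ 2 := hK
    have hG := abs_G_le hσ hki ((x i - xs j i) / σ)
    rw [abs_mul, abs_pow, abs_div, abs_one]
    calc (1 / |σ|) ^ (k i) * |G (k i) ((x i - xs j i) / σ)|
        ≤ (1 / |σ|) ^ (k i) * σ ^ (k i) := by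
          apply mul_le_mul_of_nonneg_left hG (by positivity)
      _ = 1 := by
          rw [abs_of_pos hσ]
          rw [div_pow, one_pow, div_mul_cancel₀ _ (pow_ne_zero _ hσ')]
  calc |∑ j, α j * ∏ i, deriv^[k i] (w j i) (x i)|
      ≤ ∑ j, |α j * ∏ i, deriv^[k i] (w j i) (x i)| := Finset.abs_sum_le_sum_abs _ _
    _ ≤ ∑ j, |α j| := by
        refine Finset.sum_le_sum (fun j _ => ?_)
        rw [abs_mul]
        refine mul_le_of_le_one_right (abs_nonneg _) ?_
        rw [Finset.abs_prod]
        refine Finset.prod_le_one (fun i _ => abs_nonneg _) (fun i _ => hterm j i)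
    _ ≤ 1 := hα
end

section
/- Let d ≥ 1, σ > 0, y ∈ ℝ^d, and define f : ℝ^d → ℝ by f(x) = exp(−‖x − y‖²/(2σ²)). Then for every natural number K ≥ 1 and every multi-index k = (k_1, …, k_d) with |k| = K, and every x ∈ ℝ^d, |D^k f(x)| ≤ (K!)^{1/2} / σ^K. -/
open MeasureTheory Real Filter Set

open scoped BigOperators

namespace GaussAux

lemma integrable_abs_pow_mul_gauss (n : ℕ) :
    Integrable (fun t : ℝ => |t| ^ n * Real.exp (-(t ^ 2 / 2))) := by
  have h := (integrable_rpow_mul_exp_neg_mul_sq (b := 1/2) one_half_pos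
    (s := (n : ℝ)) (by exact_mod_cast neg_one_lt_zero.trans_le (Nat.cast_nonneg n))).abs
  refine h.congr (Filter.Eventually.of_forall fun t => ?_)
  simp only [Real.rpow_natCast, abs_mul, abs_pow, abs_of_nonneg (Real.exp_pos _).le]
  congr 2
  ring_nf

noncomputable def Mm (n : ℕ) : ℝ := ∫ t : ℝ, |t| ^ n * Real.exp (-(t ^ 2 / 2))

lemma Mm_eq_Ioi (n : ℕ) : Mm n = 2 * ∫ t in Ioi (0:ℝ), t ^ n * Real.exp (-(t ^ 2 / 2)) := by
  rw [Mm, ← integral_comp_abs (f := fun t => t ^ n * Real.exp (-(t ^ 2 / 2)))]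
  congr 1 with t
  rw [sq_abs]

lemma Mm_zero : Mm 0 = Real.sqrt (2 * π) := by
  rw [Mm_eq_Ioi]
  have h := integral_gaussian_Ioi (1/2 : ℝ)
  simp only [pow_zero, one_mul]
  rw [show (fun t : ℝ => Real.exp (-(t ^ 2 / 2))) = fun t : ℝ => Real.exp (-(1/2) * t ^ 2) by
    funext t; ring_nf] at *
  rw [h]
  rw [show π / (1/2 : ℝ) = 2 * π by ring]
  ring

end GaussAux

namespace GaussAux

lemma integrableOn_pow_gauss (m : ℕ) :
    IntegrableOn (fun t : ℝ => t ^ m * Real.exp (-(t ^ 2 / 2))) (Ioi 0) := by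
  refine ((integrable_abs_pow_mul_gauss m).integrableOn).congr_fun (fun t ht => ?_) measurableSet_Ioi
  dsimp only
  rw [abs_of_nonneg (le_of_lt ht)]

lemma tendsto_pow_gauss (m : ℕ) :
    Tendsto (fun t : ℝ => t ^ m * Real.exp (-(t ^ 2 / 2))) atTop (nhds 0) := by
  have h2 : Tendsto (fun x : ℝ => Real.exp (-(1/2) * x)) atTop (nhds 0) := by
    have h1 : Tendsto (fun x : ℝ => (1/2:ℝ) * x) atTop atTop :=
      Filter.Tendsto.const_mul_atTop (by norm_num) tendsto_id
    exact (Real.tendsto_exp_atBot.comp (tendsto_neg_atTop_atBot.comp h1)).congr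
      (fun x => by simp [Function.comp, neg_mul])
  have h := (rpow_mul_exp_neg_mul_sq_isLittleO_exp_neg one_half_pos ((m : ℝ))).tendsto_zero_of_tendsto h2
  convert h using 2 with t
  rw [Real.rpow_natCast]
  ring_nf

lemma Mm_one : Mm 1 = 2 := by
  rw [Mm_eq_Ioi]
  have hderiv : ∀ t ∈ Ici (0:ℝ), HasDerivAt (fun t : ℝ => -Real.exp (-(t ^ 2 / 2)))
      (t ^ 1 * Real.exp (-(t ^ 2 / 2))) t := by
    intro t _
    have : HasDerivAt (fun t : ℝ => -(t ^ 2 / 2)) (-t) t := by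
      exact (((hasDerivAt_pow 2 t).div_const 2).neg).congr_deriv (by norm_num)
    have h2 : HasDerivAt (fun t : ℝ => -Real.exp (-(t ^ 2 / 2))) _ t := (this.exp).neg
    convert h2 using 1
    ring
  have hlim : Tendsto (fun t : ℝ => -Real.exp (-(t ^ 2 / 2))) atTop (nhds 0) := by
    simpa using (tendsto_pow_gauss 0).neg
  have h := integral_Ioi_of_hasDerivAt_of_tendsto' hderiv (integrableOn_pow_gauss 1) hlim
  rw [h]
  norm_num

end GaussAux

namespace GaussAux

lemma Mm_rec (n : ℕ) : Mm (n + 2) = (n + 1) * Mm n := by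
  rw [Mm_eq_Ioi, Mm_eq_Ioi]
  have key : ∫ t in Ioi (0:ℝ), (t ^ (n+2) * Real.exp (-(t ^ 2 / 2))
      - (n+1 : ℝ) * (t ^ n * Real.exp (-(t ^ 2 / 2)))) = 0 := by
    have hderiv : ∀ t ∈ Ici (0:ℝ), HasDerivAt (fun t : ℝ => -(t ^ (n+1) * Real.exp (-(t ^ 2 / 2))))
        (t ^ (n+2) * Real.exp (-(t ^ 2 / 2)) - (n+1 : ℝ) * (t ^ n * Real.exp (-(t ^ 2 / 2)))) t := by
      intro t _
      have hexp : HasDerivAt (fun t : ℝ => Real.exp (-(t ^ 2 / 2)))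
          (Real.exp (-(t ^ 2 / 2)) * (-t)) t := by
        have : HasDerivAt (fun t : ℝ => -(t ^ 2 / 2)) (-t) t := by
          exact (((hasDerivAt_pow 2 t).div_const 2).neg).congr_deriv (by norm_num)
        exact this.exp
      have : HasDerivAt (fun t : ℝ => -(t ^ (n+1) * Real.exp (-(t ^ 2 / 2)))) _ t :=
        ((hasDerivAt_pow (n+1) t).mul hexp).neg
      convert this using 1
      push_cast
      ring
    have hlim : Tendsto (fun t : ℝ => -(t ^ (n+1) * Real.exp (-(t ^ 2 / 2)))) atTop (nhds 0) := by
      simpa using (tendsto_pow_gauss (n+1)).neg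
    have hint : IntegrableOn (fun t : ℝ => t ^ (n+2) * Real.exp (-(t ^ 2 / 2))
        - (n+1 : ℝ) * (t ^ n * Real.exp (-(t ^ 2 / 2)))) (Ioi 0) :=
      (integrableOn_pow_gauss (n+2)).sub ((integrableOn_pow_gauss n).const_mul _)
    have h := integral_Ioi_of_hasDerivAt_of_tendsto' hderiv hint hlim
    rw [h]
    simp
  rw [integral_sub (integrableOn_pow_gauss (n+2)) ((integrableOn_pow_gauss n).const_mul _),
    integral_const_mul, sub_eq_zero] at key
  rw [key]
  ring

lemma Mm_le (n : ℕ) : Mm n ≤ Real.sqrt (n.factorial) * Real.sqrt (2 * π) := by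
  induction n using Nat.strong_induction_on with
  | _ n ih =>
    match n with
    | 0 => simp [Mm_zero, Nat.factorial]
    | 1 =>
      rw [Mm_one]
      have h1 : (1:ℝ) ≤ Real.sqrt 1 * 1 := by norm_num
      have h2 : (2:ℝ) ≤ Real.sqrt (2 * π) := by
        have h4 : Real.sqrt 4 ≤ Real.sqrt (2 * π) :=
          Real.sqrt_le_sqrt (by nlinarith [Real.pi_gt_three])
        have : Real.sqrt 4 = 2 := by
          rw [show (4:ℝ) = 2^2 by norm_num, Real.sqrt_sq (by norm_num)]
        linarith

      simpa [Nat.factorial] using h2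
    | (m + 2) =>
      rw [Mm_rec]
      have ihm := ih m (by omega)
      calc (m + 1 : ℝ) * Mm m ≤ (m + 1 : ℝ) * (Real.sqrt (m.factorial) * Real.sqrt (2 * π)) := by
            apply mul_le_mul_of_nonneg_left ihm (by positivity)
        _ ≤ Real.sqrt ((m+2).factorial) * Real.sqrt (2 * π) := by
            rw [← mul_assoc]
            apply mul_le_mul_of_nonneg_right _ (Real.sqrt_nonneg _)
            rw [show (m + 1 : ℝ) = Real.sqrt ((m+1:ℝ)^2) by rw [Real.sqrt_sq (by positivity)]]
            rw [← Real.sqrt_mul (by positivity)]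
            apply Real.sqrt_le_sqrt
            have : ((m+1:ℝ)^2 : ℝ) * (m.factorial : ℝ) ≤ ((m+2:ℕ) : ℝ) * ((m+1:ℕ) : ℝ) * (m.factorial : ℝ) := by
              push_cast
              nlinarith [Nat.cast_nonneg (α := ℝ) m.factorial, sq_nonneg (m:ℝ)]
            calc ((m+1:ℝ)^2) * (m.factorial : ℝ) ≤ _ := this
              _ = ((m+2).factorial : ℝ) := by
                  rw [show (m+2).factorial = (m+2) * ((m+1) * m.factorial) by
                    simp [Nat.factorial]]
                  push_cast
                  ring

end GaussAux
namespace GaussAux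

lemma cos_gauss_integral (x : ℝ) :
    ∫ t : ℝ, Real.cos (x * t) * Real.exp (-(t ^ 2 / 2))
      = Real.sqrt (2 * π) * Real.exp (-(x ^ 2 / 2)) := by
  have hb : (0:ℝ) < (1/2 : ℂ).re := by norm_num
  have h := fourierIntegral_gaussian (b := (1/2 : ℂ)) hb ((x : ℂ))
  have heq : (fun τ : ℝ => Complex.exp (Complex.I * x * τ) * Complex.exp (-(1/2) * (τ:ℂ)^2))
      = fun τ : ℝ => Complex.exp (-(1/2) * (τ:ℂ)^2 + (Complex.I*x)*τ + 0) := by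
    funext τ
    rw [← Complex.exp_add]
    ring_nf
  have hint : Integrable (fun τ : ℝ => Complex.exp (Complex.I * x * τ) * Complex.exp (-(1/2) * (τ:ℂ)^2)) := by
    rw [heq]
    exact integrable_cexp_quadratic (by norm_num) _ _
  have hre := congrArg Complex.re h
  have hcomm := integral_re hint
  simp only [RCLike.re_to_complex] at hcomm
  rw [← hcomm] at hre
  have hlhs : ∀ τ : ℝ, (Complex.exp (Complex.I * x * τ) * Complex.exp (-(1/2) * (τ:ℂ)^2)).re
      = Real.cos (x * τ) * Real.exp (-(τ ^ 2 / 2)) := by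
    intro τ
    have h1 : Complex.exp (-(1/2) * (τ:ℂ)^2) = ((Real.exp (-(τ ^ 2 / 2)) : ℝ) : ℂ) := by
      rw [Complex.ofReal_exp]
      congr 1
      push_cast
      ring
    have h2 : Complex.I * x * τ = ((x * τ : ℝ) : ℂ) * Complex.I := by push_cast; ring
    rw [h1, h2]
    simp only [Complex.mul_re, Complex.ofReal_re, Complex.ofReal_im,
      Complex.exp_ofReal_mul_I_re, Complex.exp_ofReal_mul_I_im, mul_zero, sub_zero]
  have hrhs : ((π / (1/2 : ℂ)) ^ (1/2 : ℂ) * Complex.exp (-(x:ℂ) ^ 2 / (4 * (1/2)))).re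
      = Real.sqrt (2 * π) * Real.exp (-(x ^ 2 / 2)) := by
    have h1 : (π / (1/2 : ℂ)) = ((2 * π : ℝ) : ℂ) := by push_cast; ring
    have h2 : ((2 * π : ℝ) : ℂ) ^ (1/2 : ℂ) = ((Real.sqrt (2 * π) : ℝ) : ℂ) := by
      rw [Real.sqrt_eq_rpow]
      rw [Complex.ofReal_cpow (by positivity)]
      norm_num
    have h3 : Complex.exp (-(x:ℂ) ^ 2 / (4 * (1/2))) = ((Real.exp (-(x ^ 2 / 2)) : ℝ) : ℂ) := by
      rw [Complex.ofReal_exp]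
      congr 1
      push_cast
      ring
    rw [h1, h2, h3, ← Complex.ofReal_mul]
    exact Complex.ofReal_re _
  rw [hrhs] at hre
  rw [← hre]
  apply integral_congr_ae
  exact Filter.Eventually.of_forall fun τ => (hlhs τ).symm

end GaussAux

namespace GaussAux

noncomputable def G : ℝ → ℝ := fun t => Real.exp (-(t ^ 2 / 2))

lemma contDiff_G : ContDiff ℝ (⊤ : ℕ∞) G :=
  (Real.contDiff_exp.of_le le_top).comp (((contDiff_id (𝕜 := ℝ)).pow 2).div_const 2).neg

noncomputable def intφ (n : ℕ) (x : ℝ) : ℝ :=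
  ∫ t : ℝ, t ^ n * Real.cos (x * t + n * (π/2)) * Real.exp (-(t ^ 2 / 2))

lemma continuous_integrand (n : ℕ) (x : ℝ) :
    Continuous (fun t : ℝ => t ^ n * Real.cos (x * t + n * (π/2)) * Real.exp (-(t ^ 2 / 2))) := by
  fun_prop

lemma integrable_integrand (n : ℕ) (x : ℝ) :
    Integrable (fun t : ℝ => t ^ n * Real.cos (x * t + n * (π/2)) * Real.exp (-(t ^ 2 / 2))) := by
  refine (integrable_abs_pow_mul_gauss n).mono' (continuous_integrand n x).aestronglyMeasurable ?_
  refine Filter.Eventually.of_forall fun t => ?_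
  rw [Real.norm_eq_abs, abs_mul, abs_mul, abs_pow]
  have h1 : |Real.cos (x * t + n * (π/2))| ≤ 1 := Real.abs_cos_le_one _
  have h2 : |Real.exp (-(t ^ 2 / 2))| = Real.exp (-(t ^ 2 / 2)) := abs_of_pos (Real.exp_pos _)
  rw [h2]
  calc |t| ^ n * |Real.cos (x * t + n * (π/2))| * Real.exp (-(t ^ 2 / 2))
      ≤ |t| ^ n * 1 * Real.exp (-(t ^ 2 / 2)) := by
        apply mul_le_mul_of_nonneg_right _ (Real.exp_pos _).le
        exact mul_le_mul_of_nonneg_left h1 (by positivity)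
    _ = |t| ^ n * Real.exp (-(t ^ 2 / 2)) := by ring

lemma intφ_zero (x : ℝ) : intφ 0 x = Real.sqrt (2 * π) * Real.exp (-(x ^ 2 / 2)) := by
  rw [← cos_gauss_integral x, intφ]
  congr 1 with t
  norm_num

lemma hasDerivAt_intφ (n : ℕ) (x₀ : ℝ) : HasDerivAt (intφ n) (intφ (n+1) x₀) x₀ := by
  have key := hasDerivAt_integral_of_dominated_loc_of_deriv_le (μ := volume) (𝕜 := ℝ)
    (F := fun (x : ℝ) (t : ℝ) => t ^ n * Real.cos (x * t + n * (π/2)) * Real.exp (-(t ^ 2 / 2)))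
    (F' := fun (x : ℝ) (t : ℝ) => t ^ n * (-Real.sin (x * t + n * (π/2)) * t) * Real.exp (-(t ^ 2 / 2)))
    (x₀ := x₀) (s := Metric.ball x₀ 1) (bound := fun t => |t| ^ (n+1) * Real.exp (-(t ^ 2 / 2)))
    (Metric.ball_mem_nhds x₀ one_pos)
    (Filter.Eventually.of_forall fun x => (continuous_integrand n x).aestronglyMeasurable)
    (integrable_integrand n x₀)
    (Continuous.aestronglyMeasurable (by fun_prop))
    (Filter.Eventually.of_forall fun t => ?_)
    (integrable_abs_pow_mul_gauss (n+1))
    (Filter.Eventually.of_forall fun t => ?_)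
  · have h2 : intφ (n+1) x₀
        = ∫ t : ℝ, t ^ n * (-Real.sin (x₀ * t + n * (π/2)) * t) * Real.exp (-(t ^ 2 / 2)) := by
      rw [intφ]
      congr 1 with t
      have : ((n:ℝ)+1) * (π/2) = n * (π/2) + π/2 := by ring
      rw [pow_succ]
      push_cast
      rw [this, ← add_assoc, Real.cos_add_pi_div_two]
      ring
    rw [h2]
    exact key.2
  · intro x _
    rw [Real.norm_eq_abs, abs_mul, abs_mul, abs_pow, abs_of_pos (Real.exp_pos _)]
    have h1 : |(-Real.sin (x * t + n * (π/2)) * t)| ≤ |t| := by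
      rw [abs_mul, abs_neg]
      calc |Real.sin (x * t + n * (π/2))| * |t| ≤ 1 * |t| :=
            mul_le_mul_of_nonneg_right (Real.abs_sin_le_one _) (abs_nonneg t)
        _ = |t| := one_mul _
    calc |t| ^ n * |(-Real.sin (x * t + n * (π/2)) * t)| * Real.exp (-(t ^ 2 / 2))
        ≤ |t| ^ n * |t| * Real.exp (-(t ^ 2 / 2)) := by
          apply mul_le_mul_of_nonneg_right _ (Real.exp_pos _).le
          exact mul_le_mul_of_nonneg_left h1 (by positivity)
      _ = |t| ^ (n+1) * Real.exp (-(t ^ 2 / 2)) := by ring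
  · intro x _
    have hlin : HasDerivAt (fun x : ℝ => x * t + n * (π/2)) t x := by
      simpa using ((hasDerivAt_id x).mul_const t).add_const ((n:ℝ) * (π/2))
    have hcos : HasDerivAt (fun x : ℝ => Real.cos (x * t + n * (π/2)))
        (-Real.sin (x * t + n * (π/2)) * t) x := hlin.cos
    exact (hcos.const_mul ((t:ℝ) ^ n)).mul_const _

lemma deriv_iter_G (n : ℕ) :
    deriv^[n] G = fun x => (Real.sqrt (2 * π))⁻¹ * intφ n x := by
  induction n with
  | zero =>
    funext x
    simp only [Function.iterate_zero, id_eq, intφ_zero]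
    rw [← mul_assoc, inv_mul_cancel₀ (by positivity), one_mul]
    rfl
  | succ n ih =>
    rw [Function.iterate_succ_apply', ih]
    funext x
    exact (((hasDerivAt_intφ n x).const_mul _)).deriv

lemma abs_deriv_iter_G_le (n : ℕ) (x : ℝ) :
    |deriv^[n] G x| ≤ Real.sqrt n.factorial := by
  rw [deriv_iter_G]
  have h1 : |intφ n x| ≤ Mm n := by
    rw [intφ, Mm]
    have h0 := norm_integral_le_integral_norm (μ := volume)
      (f := fun t : ℝ => t ^ n * Real.cos (x * t + n * (π/2)) * Real.exp (-(t ^ 2 / 2)))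
    simp only [Real.norm_eq_abs] at h0
    refine le_trans h0 ?_
    apply integral_mono ((integrable_integrand n x).abs) (integrable_abs_pow_mul_gauss n)
    intro t
    show |t ^ n * Real.cos (x * t + n * (π/2)) * Real.exp (-(t ^ 2 / 2))| ≤ _
    rw [abs_mul, abs_mul, abs_pow, abs_of_pos (Real.exp_pos _)]
    calc |t| ^ n * |Real.cos (x * t + n * (π/2))| * Real.exp (-(t ^ 2 / 2))
        ≤ |t| ^ n * 1 * Real.exp (-(t ^ 2 / 2)) := by
          apply mul_le_mul_of_nonneg_right _ (Real.exp_pos _).le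
          exact mul_le_mul_of_nonneg_left (Real.abs_cos_le_one _) (by positivity)
      _ = |t| ^ n * Real.exp (-(t ^ 2 / 2)) := by ring
  have hpos : (0:ℝ) < Real.sqrt (2 * π) := by positivity
  rw [abs_mul, abs_of_pos (inv_pos.mpr hpos)]
  rw [inv_mul_le_iff₀ hpos]
  calc |intφ n x| ≤ Mm n := h1
    _ ≤ Real.sqrt n.factorial * Real.sqrt (2 * π) := Mm_le n
    _ = Real.sqrt (2 * π) * Real.sqrt n.factorial := mul_comm _ _

end GaussAux

namespace GaussAux

variable {d : ℕ}

noncomputable def P (h : Fin d → ℝ → ℝ) : (Fin d → ℝ) → ℝ := fun x => ∏ j, h j (x j)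

lemma hasFDerivAt_P (h : Fin d → ℝ → ℝ) (hh : ∀ j, ContDiff ℝ (⊤ : ℕ∞) (h j)) (x : Fin d → ℝ) :
    HasFDerivAt (P h) (∑ j, (∏ l ∈ Finset.univ.erase j, h l (x l)) •
      ((deriv (h j) (x j)) • (ContinuousLinearMap.proj j : (Fin d → ℝ) →L[ℝ] ℝ))) x := by
  refine HasFDerivAt.finset_prod (u := Finset.univ)
    (g := fun j (x : Fin d → ℝ) => h j (x j))
    (g' := fun j => (deriv (h j) (x j)) • (ContinuousLinearMap.proj j)) (fun j _ => ?_)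
  have h1 : HasDerivAt (h j) (deriv (h j) (x j)) (x j) :=
    (((hh j).differentiable (by simp)) (x j)).hasDerivAt
  have h2 : HasFDerivAt (fun x : Fin d → ℝ => x j)
      (ContinuousLinearMap.proj j : (Fin d → ℝ) →L[ℝ] ℝ) x :=
    hasFDerivAt_apply j x
  exact h1.comp_hasFDerivAt x h2

lemma pderiv'_P (h : Fin d → ℝ → ℝ) (hh : ∀ j, ContDiff ℝ (⊤ : ℕ∞) (h j)) (i : Fin d) :
    pderiv' i (P h) = P (Function.update h i (deriv (h i))) := by
  funext x
  rw [pderiv', (hasFDerivAt_P h hh x).fderiv]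
  rw [ContinuousLinearMap.sum_apply]
  have hterm : ∀ j : Fin d, ((∏ l ∈ Finset.univ.erase j, h l (x l)) •
      ((deriv (h j) (x j)) • (ContinuousLinearMap.proj j : (Fin d → ℝ) →L[ℝ] ℝ)))
      (Pi.single i 1)
      = (∏ l ∈ Finset.univ.erase j, h l (x l)) * (deriv (h j) (x j)
        * (if j = i then 1 else 0)) := by
    intro j
    simp [ContinuousLinearMap.smul_apply, ContinuousLinearMap.proj_apply, Pi.single_apply,
      smul_eq_mul]
  have hrhs : P (Function.update h i (deriv (h i))) x
      = deriv (h i) (x i) * ∏ l ∈ Finset.univ.erase i, h l (x l) := by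
    rw [P]
    have h3 : ∀ j : Fin d, Function.update h i (deriv (h i)) j (x j)
        = Function.update (fun j => h j (x j)) i (deriv (h i) (x i)) j := by
      intro j
      rcases eq_or_ne j i with rfl | hne
      · simp
      · simp [Function.update_of_ne hne]
    rw [Finset.prod_congr rfl (fun j _ => h3 j),
      Finset.prod_update_of_mem (Finset.mem_univ i), ← Finset.erase_eq]
  rw [Finset.sum_congr rfl (fun j _ => hterm j),
    Finset.sum_eq_single i (fun j _ hji => by simp [hji]) (fun hi => (hi (Finset.mem_univ i)).elim),
    hrhs]
  simp [mul_comm]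

lemma update_contDiff (h : Fin d → ℝ → ℝ) (hh : ∀ j, ContDiff ℝ (⊤ : ℕ∞) (h j)) (i : Fin d)
    (g : ℝ → ℝ) (hg : ContDiff ℝ (⊤ : ℕ∞) g) : ∀ j, ContDiff ℝ (⊤ : ℕ∞) (Function.update h i g j) := by
  intro j
  rcases eq_or_ne j i with rfl | hne
  · simpa using hg
  · rw [Function.update_of_ne hne]; exact hh j

lemma pderiv'_iter_P (i : Fin d) (m : ℕ) :
    ∀ (h : Fin d → ℝ → ℝ), (∀ j, ContDiff ℝ (⊤ : ℕ∞) (h j)) →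
    (pderiv' i)^[m] (P h) = P (Function.update h i (deriv^[m] (h i))) := by
  induction m with
  | zero => intro h hh; simp [Function.update_eq_self]
  | succ m ih =>
    intro h hh
    have hd : ContDiff ℝ (⊤ : ℕ∞) (deriv (h i)) := by
      have := (hh i).iterate_deriv 1
      rwa [Function.iterate_one] at this
    rw [Function.iterate_succ_apply, pderiv'_P h hh i,
      ih _ (update_contDiff h hh i _ hd)]
    rw [Function.update_self, Function.update_idem, ← Function.iterate_succ_apply]

lemma foldr_P (k : Fin d → ℕ) :
    ∀ (l : List (Fin d)), l.Nodup → ∀ (h : Fin d → ℝ → ℝ), (∀ j, ContDiff ℝ (⊤ : ℕ∞) (h j)) →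
    List.foldr (fun i g => (pderiv' i)^[k i] g) (P h) l
      = P (fun j => if j ∈ l then deriv^[k j] (h j) else h j) := by
  intro l
  induction l with
  | nil => intro _ h hh; simp
  | cons i l ih =>
    intro hnd h hh
    have hfam : ∀ j, ContDiff ℝ (⊤ : ℕ∞) ((fun j => if j ∈ l then deriv^[k j] (h j) else h j) j) := by
      intro j
      by_cases hj : j ∈ l
      · simp only [hj, if_true]; exact (hh j).iterate_deriv _
      · simp only [hj, if_false]; exact hh j
    rw [List.foldr_cons, ih (List.Nodup.of_cons hnd) h hh, pderiv'_iter_P i (k i) _ hfam]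
    have hil : i ∉ l := (List.nodup_cons.mp hnd).1
    have hfameq : Function.update (fun j => if j ∈ l then deriv^[k j] (h j) else h j) i
        (deriv^[k i] (if i ∈ l then deriv^[k i] (h i) else h i))
        = fun j => if j ∈ i :: l then deriv^[k j] (h j) else h j := by
      funext j
      rcases eq_or_ne j i with rfl | hne
      · simp [Function.update_self, hil]
      · rw [Function.update_of_ne hne]
        simp only [List.mem_cons]
        by_cases hj : j ∈ l
        · simp [hj, hne]
        · simp [hj, hne]
    rw [hfameq]

end GaussAux

namespace GaussAux

lemma contDiff_iter_G (n : ℕ) : ContDiff ℝ (⊤ : ℕ∞) (deriv^[n] G) :=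
  contDiff_G.iterate_deriv n

noncomputable def gs (c σ : ℝ) : ℝ → ℝ := fun t => G ((t - c) / σ)

lemma contDiff_gs (c σ : ℝ) : ContDiff ℝ (⊤ : ℕ∞) (gs c σ) :=
  contDiff_G.comp (((contDiff_id (𝕜 := ℝ)).sub contDiff_const).div_const σ)

lemma deriv_iter_gs (c σ : ℝ) (n : ℕ) :
    deriv^[n] (gs c σ) = fun t => (σ⁻¹) ^ n * deriv^[n] G ((t - c) / σ) := by
  induction n with
  | zero => funext t; simp [gs]
  | succ n ih =>
    rw [Function.iterate_succ_apply', ih]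
    funext t
    have haff : HasDerivAt (fun t : ℝ => (t - c) / σ) σ⁻¹ t := by
      simpa [div_eq_mul_inv] using (((hasDerivAt_id t).sub_const c).div_const σ)
    have hG : HasDerivAt (deriv^[n] G) (deriv^[n+1] G ((t - c) / σ)) ((t - c) / σ) := by
      rw [Function.iterate_succ_apply']
      exact (((contDiff_iter_G n).differentiable (by simp)) _).hasDerivAt
    have hcomp := hG.comp t haff
    have : HasDerivAt (fun t : ℝ => (σ⁻¹ : ℝ) ^ n * deriv^[n] G ((t - c) / σ))
        ((σ⁻¹) ^ n * (deriv^[n+1] G ((t - c) / σ) * σ⁻¹)) t := hcomp.const_mul _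
    rw [this.deriv]
    ring

lemma abs_deriv_iter_gs_le (c σ : ℝ) (hσ : 0 < σ) (n : ℕ) (t : ℝ) :
    |deriv^[n] (gs c σ) t| ≤ Real.sqrt n.factorial / σ ^ n := by
  rw [deriv_iter_gs, abs_mul, abs_pow, abs_of_pos (inv_pos.mpr hσ)]
  have h2 : Real.sqrt n.factorial / σ ^ n = σ⁻¹ ^ n * Real.sqrt n.factorial := by
    rw [inv_pow]
    ring
  rw [h2]
  exact mul_le_mul_of_nonneg_left (abs_deriv_iter_G_le n _) (by positivity)

lemma sqrt_prod {ι : Type*} (s : Finset ι) (f : ι → ℝ) (hf : ∀ i ∈ s, 0 ≤ f i) :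
    Real.sqrt (∏ i ∈ s, f i) = ∏ i ∈ s, Real.sqrt (f i) := by
  induction s using Finset.cons_induction with
  | empty => simp
  | cons a s ha ih =>
    rw [Finset.prod_cons, Finset.prod_cons,
      Real.sqrt_mul (hf a (Finset.mem_cons_self a s)),
      ih (fun i hi => hf i (Finset.mem_cons_of_mem hi))]

end GaussAux

open GaussAux in
/-- every order-`K` mixed partial derivative of the Gaussian kernel
`x ↦ exp(−‖x − y‖²/(2σ²))` is bounded by `(K!)^{1/2} / σ^K`. -/
theorem gaussian_kernel_derivative_bound
    (d : ℕ) (hd : 1 ≤ d) (σ : ℝ) (hσ : 0 < σ) (y : Fin d → ℝ)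
    (f : (Fin d → ℝ) → ℝ)
    (hf : f = fun x => Real.exp (-(∑ i, (x i - y i) ^ 2) / (2 * σ ^ 2)))
    (K : ℕ) (hK : 1 ≤ K) (k : Fin d → ℕ) (hk : (∑ i, k i) = K)
    (x : Fin d → ℝ) :
    |mixedPartial k f x| ≤ Real.sqrt (Nat.factorial K) / σ ^ K := by
  have hσ' : σ ≠ 0 := ne_of_gt hσ
  set h : Fin d → ℝ → ℝ := fun i => gs (y i) σ with hhdef
  have hh : ∀ j, ContDiff ℝ (⊤ : ℕ∞) (h j) := fun j => contDiff_gs (y j) σ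
  have hf' : f = P h := by
    rw [hf]
    funext z
    rw [P]
    have hterm : ∀ i : Fin d, h i (z i) = Real.exp (-((z i - y i) ^ 2) / (2 * σ ^ 2)) := by
      intro i
      show Real.exp (-(((z i - y i) / σ) ^ 2 / 2)) = _
      congr 1
      rw [div_pow, neg_div, div_div, mul_comm (σ ^ 2) 2]
    rw [Finset.prod_congr rfl (fun i _ => hterm i), ← Real.exp_sum]
    congr 1
    rw [← Finset.sum_div, ← Finset.sum_neg_distrib]
  have hmp : mixedPartial k f x = ∏ i, deriv^[k i] (h i) (x i) := by
    rw [hf', mixedPartial,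
      foldr_P k (List.finRange d) (List.nodup_finRange d) h hh, P]
    exact Finset.prod_congr rfl (fun i _ => by simp [List.mem_finRange])
  rw [hmp, Finset.abs_prod]
  have step1 : ∏ i, |deriv^[k i] (h i) (x i)| ≤ ∏ i, Real.sqrt ((k i).factorial) / σ ^ (k i) :=
    Finset.prod_le_prod (fun i _ => abs_nonneg _)
      (fun i _ => abs_deriv_iter_gs_le (y i) σ hσ (k i) (x i))
  refine step1.trans ?_
  rw [Finset.prod_div_distrib, Finset.prod_pow_eq_pow_sum, hk]
  have step2 : ∏ i, Real.sqrt ((k i).factorial) ≤ Real.sqrt K.factorial := by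
    rw [← sqrt_prod _ _ (fun i _ => by positivity)]
    apply Real.sqrt_le_sqrt
    rw [← Nat.cast_prod]
    have hdvd := Nat.prod_factorial_dvd_factorial_sum Finset.univ k
    rw [hk] at hdvd
    exact_mod_cast Nat.le_of_dvd K.factorial_pos hdvd
  gcongr
end

section
/- Let n ≥ 1, d ≥ 1, and let D = (z_1, …, z_n) and D′ = (z′_1, …, z′_n) be two sequences of vectors in [−1,1]^d that differ in exactly one index (i.e., there is i_0 with z_i = z′_i for all i ≠ i_0). For a sequence D define the d×d matrix A(D) = (1/n) Σ_{i=1}^n z_i z_iᵀ − z̄ z̄ᵀ, where z̄ = (1/n) Σ_{i=1}^n z_i is the mean. Then the spectral norm (largest singular value) of the difference satisfies ‖A(D) − A(D′)‖ ≤ 5d/n. -/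
open scoped BigOperators

/-- Spectral norm (largest singular value) of a real matrix, as the operator norm of
the induced linear map between Euclidean spaces. -/
noncomputable def specNorm {n d : ℕ} (A : Matrix (Fin n) (Fin d) ℝ) : ℝ :=
  ‖LinearMap.toContinuousLinearMap (Matrix.toEuclideanLin A)‖

/-- Empirical covariance matrix `A(D) = (1/n) Σᵢ zᵢ zᵢᵀ − z̄ z̄ᵀ` of a database
`D = (z₁, …, z_n)` of vectors in `ℝ^d`, where `z̄` is the sample mean. -/
noncomputable def covMatrix {n d : ℕ} (z : Fin n → (Fin d → ℝ)) :
    Matrix (Fin d) (Fin d) ℝ :=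
  (1 / n : ℝ) • (∑ i, Matrix.vecMulVec (z i) (z i)) -
    Matrix.vecMulVec (fun j => (1 / n : ℝ) * ∑ i, z i j)
      (fun j => (1 / n : ℝ) * ∑ i, z i j)

open Matrix

lemma aux_dot {d : ℕ} (a b v : Fin d → ℝ) :
    v ⬝ᵥ (Matrix.vecMulVec a b *ᵥ v) = (a ⬝ᵥ v) * (b ⬝ᵥ v) := by
  simp only [dotProduct, Matrix.mulVec, Matrix.vecMulVec_apply, Finset.sum_mul,
    Finset.mul_sum]
  rw [Finset.sum_comm]
  refine Finset.sum_congr rfl fun j _ => Finset.sum_congr rfl fun k _ => by ring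

lemma aux_cs {d : ℕ} (a v : Fin d → ℝ) : (a ⬝ᵥ v) * (a ⬝ᵥ v) ≤ (a ⬝ᵥ a) * (v ⬝ᵥ v) := by
  have h := Finset.sum_mul_sq_le_sq_mul_sq Finset.univ a v
  simp only [sq] at h
  simpa [dotProduct] using h

lemma aux_dot_self_le {d : ℕ} {a : Fin d → ℝ} {c : ℝ} (h : ∀ j, |a j| ≤ c) :
    a ⬝ᵥ a ≤ (d : ℝ) * (c * c) := by
  calc a ⬝ᵥ a = ∑ j, a j * a j := rfl
    _ ≤ ∑ _j : Fin d, c * c := by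
        refine Finset.sum_le_sum fun j _ => ?_
        calc a j * a j = |a j| * |a j| := (abs_mul_abs_self _).symm
          _ ≤ c * c := mul_self_le_mul_self (abs_nonneg _) (h j)
    _ = (d : ℝ) * (c * c) := by simp [Finset.card_univ, mul_comm]

lemma aux_abs_le_of_sq {a B : ℝ} (hB : 0 ≤ B) (h : a * a ≤ B * B) : |a| ≤ B := by
  nlinarith [abs_nonneg a, abs_mul_abs_self a]

lemma aux_opnorm {E : Type*} [NormedAddCommGroup E] [InnerProductSpace ℝ E]
    (T : E →L[ℝ] E) (hT : ∀ x y : E, (inner ℝ (T x) y : ℝ) = inner ℝ x (T y))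
    {c : ℝ} (hc : 0 ≤ c) (h : ∀ x : E, |(inner ℝ (T x) x : ℝ)| ≤ c * (‖x‖ * ‖x‖)) :
    ‖T‖ ≤ c := by
  refine T.opNorm_le_bound hc fun x => ?_
  rcases eq_or_ne (T x) 0 with h0 | h0
  · rw [h0, norm_zero]
    positivity
  rcases eq_or_ne x 0 with rfl | hx0
  · simp at h0
  have hx : 0 < ‖x‖ := norm_pos_iff.mpr hx0
  have hTx : 0 < ‖T x‖ := norm_pos_iff.mpr h0
  set y : E := (‖x‖ / ‖T x‖) • T x with hy
  have hny : ‖y‖ = ‖x‖ := by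
    rw [hy, norm_smul, Real.norm_eq_abs, abs_of_nonneg (by positivity)]
    field_simp
  have key : (inner ℝ (T x) y : ℝ) = ‖x‖ * ‖T x‖ := by
    rw [hy, real_inner_smul_right, real_inner_self_eq_norm_mul_norm]
    field_simp
  have hsym : (inner ℝ (T y) x : ℝ) = inner ℝ (T x) y := by
    rw [hT y x, real_inner_comm]
  have pol : 4 * (inner ℝ (T x) y : ℝ) =
      (inner ℝ (T (x + y)) (x + y) : ℝ) - (inner ℝ (T (x - y)) (x - y) : ℝ) := by
    simp only [map_add, map_sub, inner_add_left, inner_add_right, inner_sub_left,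
      inner_sub_right]
    linarith [hsym]
  have hb1 := h (x + y)
  have hb2 := h (x - y)
  have par := parallelogram_law_with_norm ℝ x y
  have e1 : (inner ℝ (T (x + y)) (x + y) : ℝ) ≤ c * (‖x + y‖ * ‖x + y‖) :=
    le_trans (le_abs_self _) hb1
  have e2 : -(c * (‖x - y‖ * ‖x - y‖)) ≤ (inner ℝ (T (x - y)) (x - y) : ℝ) :=
    neg_le_of_abs_le hb2
  have hmul : c * (‖x + y‖ * ‖x + y‖ + ‖x - y‖ * ‖x - y‖)
      = c * (2 * (‖x‖ * ‖x‖ + ‖y‖ * ‖y‖)) := by simp only [sq] at par; rw [par]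
  have h4 : 4 * (‖x‖ * ‖T x‖) ≤ 4 * (c * (‖x‖ * ‖x‖)) := by
    rw [hny] at hmul
    nlinarith [key, pol, e1, e2, hmul]
  nlinarith [h4, hx]


/-- the empirical covariance matrix has spectral-norm sensitivity at most
`5d/n` with respect to changing a single data point in `[−1,1]^d`. -/
theorem covariance_sensitivity
    (n d : ℕ) (hn : 1 ≤ n) (hd : 1 ≤ d)
    (z z' : Fin n → (Fin d → ℝ))
    (hz : ∀ i j, z i j ∈ Set.Icc (-1 : ℝ) 1)
    (hz' : ∀ i j, z' i j ∈ Set.Icc (-1 : ℝ) 1)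
    (i₀ : Fin n) (hneighbor : ∀ i, i ≠ i₀ → z i = z' i) :
    specNorm (covMatrix z - covMatrix z') ≤ 5 * d / n := by
  have hnpos : (0:ℝ) < n := by exact_mod_cast hn
  set u : Fin d → ℝ := z i₀ with hu
  set u' : Fin d → ℝ := z' i₀ with hu'
  set m : Fin d → ℝ := fun j => (1 / n : ℝ) * ∑ i, z i j with hm
  set m' : Fin d → ℝ := fun j => (1 / n : ℝ) * ∑ i, z' i j with hm'
  set M : Matrix (Fin d) (Fin d) ℝ := covMatrix z - covMatrix z' with hMdef
  -- matrix identity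
  have hS : (∑ i, Matrix.vecMulVec (z i) (z i)) - (∑ i, Matrix.vecMulVec (z' i) (z' i))
      = Matrix.vecMulVec u u - Matrix.vecMulVec u' u' := by
    rw [← Finset.sum_sub_distrib, Finset.sum_eq_single i₀]
    · intro i _ hi
      rw [hneighbor i hi, sub_self]
    · intro hmem
      exact absurd (Finset.mem_univ i₀) hmem
  have hM : M = (1 / n : ℝ) • (Matrix.vecMulVec u u - Matrix.vecMulVec u' u') -
      (Matrix.vecMulVec m m - Matrix.vecMulVec m' m') := by
    rw [hMdef]
    unfold covMatrix
    rw [← hS, smul_sub]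
    abel
  -- Hermitian
  have hHerm : M.IsHermitian := by
    rw [hM]
    unfold Matrix.IsHermitian
    ext i j
    simp only [Matrix.conjTranspose_apply, Matrix.sub_apply, Matrix.smul_apply,
      Matrix.vecMulVec_apply, smul_eq_mul, star_trivial]
    ring
  -- quadratic form
  have hquad : ∀ v : Fin d → ℝ, v ⬝ᵥ (M *ᵥ v) =
      (1 / n : ℝ) * ((u ⬝ᵥ v) * (u ⬝ᵥ v) - (u' ⬝ᵥ v) * (u' ⬝ᵥ v)) -
        ((m ⬝ᵥ v) * (m ⬝ᵥ v) - (m' ⬝ᵥ v) * (m' ⬝ᵥ v)) := by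
    intro v
    rw [hM]
    rw [Matrix.sub_mulVec, Matrix.sub_mulVec, Matrix.smul_mulVec]
    simp only [Matrix.sub_mulVec, dotProduct_sub, dotProduct_smul, smul_eq_mul, aux_dot]
  -- entrywise bounds
  have habs_u : ∀ j, |u j| ≤ 1 := fun j => abs_le.mpr ⟨(hz i₀ j).1, (hz i₀ j).2⟩
  have habs_u' : ∀ j, |u' j| ≤ 1 := fun j => abs_le.mpr ⟨(hz' i₀ j).1, (hz' i₀ j).2⟩
  have hmean : ∀ (w : Fin n → Fin d → ℝ), (∀ i j, w i j ∈ Set.Icc (-1:ℝ) 1) →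
      ∀ j, |(1 / n : ℝ) * ∑ i, w i j| ≤ 1 := by
    intro w hw j
    have h1 : |∑ i, w i j| ≤ (n : ℝ) := by
      calc |∑ i, w i j| ≤ ∑ i, |w i j| := Finset.abs_sum_le_sum_abs _ _
        _ ≤ ∑ _i : Fin n, (1:ℝ) :=
            Finset.sum_le_sum fun i _ => abs_le.mpr ⟨(hw i j).1, (hw i j).2⟩
        _ = n := by simp
    rw [abs_mul, abs_of_nonneg (by positivity : (0:ℝ) ≤ 1 / n)]
    calc (1 / n : ℝ) * |∑ i, w i j| ≤ (1 / n) * n :=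
          mul_le_mul_of_nonneg_left h1 (by positivity)
      _ = 1 := by field_simp
  have habs_m : ∀ j, |m j| ≤ 1 := fun j => hmean z hz j
  have habs_m' : ∀ j, |m' j| ≤ 1 := fun j => hmean z' hz' j
  have habs_add : ∀ j, |m j + m' j| ≤ 2 :=
    fun j => (abs_add_le _ _).trans (by linarith [habs_m j, habs_m' j])
  have habs_diff : ∀ j, |m j - m' j| ≤ 2 / n := by
    intro j
    have hsum : (∑ i, z i j) - (∑ i, z' i j) = u j - u' j := by
      rw [← Finset.sum_sub_distrib, Finset.sum_eq_single i₀]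
      · intro i _ hi
        rw [hneighbor i hi, sub_self]
      · intro hmem
        exact absurd (Finset.mem_univ i₀) hmem
    have hdj : m j - m' j = (1 / n : ℝ) * (u j - u' j) := by
      simp only [hm, hm']
      rw [← mul_sub, hsum]
    rw [hdj, abs_mul, abs_of_nonneg (by positivity : (0:ℝ) ≤ 1 / n)]
    have h2 : |u j - u' j| ≤ 2 := (abs_sub _ _).trans (by linarith [habs_u j, habs_u' j])
    calc (1 / n : ℝ) * |u j - u' j| ≤ (1 / n) * 2 :=
          mul_le_mul_of_nonneg_left h2 (by positivity)
      _ = 2 / n := by ring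
  -- core quadratic bound
  have hbound : ∀ v : Fin d → ℝ, |v ⬝ᵥ (M *ᵥ v)| ≤ (5 * d / n) * (v ⬝ᵥ v) := by
    intro v
    have htnn : (0:ℝ) ≤ v ⬝ᵥ v := Finset.sum_nonneg fun i _ => mul_self_nonneg _
    set t : ℝ := v ⬝ᵥ v with ht
    have hU : (u ⬝ᵥ v) * (u ⬝ᵥ v) ≤ (d:ℝ) * t :=
      (aux_cs u v).trans (by nlinarith [aux_dot_self_le habs_u, htnn])
    have hU' : (u' ⬝ᵥ v) * (u' ⬝ᵥ v) ≤ (d:ℝ) * t :=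
      (aux_cs u' v).trans (by nlinarith [aux_dot_self_le habs_u', htnn])
    set p : ℝ := (fun j => m j + m' j) ⬝ᵥ v with hp
    set q : ℝ := (fun j => m j - m' j) ⬝ᵥ v with hq
    have hpq : p * q = (m ⬝ᵥ v) * (m ⬝ᵥ v) - (m' ⬝ᵥ v) * (m' ⬝ᵥ v) := by
      have h1 : p = m ⬝ᵥ v + m' ⬝ᵥ v := by
        simp [hp, dotProduct, Finset.sum_add_distrib, add_mul]
      have h2 : q = m ⬝ᵥ v - m' ⬝ᵥ v := by
        simp [hq, dotProduct, Finset.sum_sub_distrib, sub_mul]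
      rw [h1, h2]; ring
    have hp2 : p * p ≤ (d:ℝ) * (2 * 2) * t :=
      (aux_cs _ v).trans (by nlinarith [aux_dot_self_le habs_add, htnn])
    have hq2 : q * q ≤ (d:ℝ) * ((2 / n) * (2 / n)) * t :=
      (aux_cs _ v).trans (by nlinarith [aux_dot_self_le habs_diff, htnn])
    have hB : (0:ℝ) ≤ (4 * d / n) * t := by positivity
    have hsq : (p * q) * (p * q) ≤ ((4 * d / n) * t) * ((4 * d / n) * t) := by
      have hmm := mul_le_mul hp2 hq2 (mul_self_nonneg q) (by positivity)
      calc (p * q) * (p * q) = (p * p) * (q * q) := by ring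
        _ ≤ ((d:ℝ) * (2 * 2) * t) * ((d:ℝ) * ((2 / n) * (2 / n)) * t) := hmm
        _ = ((4 * d / n) * t) * ((4 * d / n) * t) := by field_simp; ring
    have hpqabs : |p * q| ≤ (4 * d / n) * t := aux_abs_le_of_sq hB hsq
    have hfirst : |(1 / n : ℝ) * ((u ⬝ᵥ v) * (u ⬝ᵥ v) - (u' ⬝ᵥ v) * (u' ⬝ᵥ v))|
        ≤ (d / n) * t := by
      rw [abs_mul, abs_of_nonneg (by positivity : (0:ℝ) ≤ 1 / n)]
      have habsX : |(u ⬝ᵥ v) * (u ⬝ᵥ v) - (u' ⬝ᵥ v) * (u' ⬝ᵥ v)| ≤ (d:ℝ) * t :=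
        abs_le.mpr ⟨by linarith [hU', mul_self_nonneg (u ⬝ᵥ v)],
          by linarith [hU, mul_self_nonneg (u' ⬝ᵥ v)]⟩
      calc (1 / n : ℝ) * |(u ⬝ᵥ v) * (u ⬝ᵥ v) - (u' ⬝ᵥ v) * (u' ⬝ᵥ v)|
          ≤ (1 / n) * ((d:ℝ) * t) := mul_le_mul_of_nonneg_left habsX (by positivity)
        _ = (d / n) * t := by ring
    rw [hquad v, ← hpq]
    calc |(1 / n : ℝ) * ((u ⬝ᵥ v) * (u ⬝ᵥ v) - (u' ⬝ᵥ v) * (u' ⬝ᵥ v)) - p * q|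
        ≤ |(1 / n : ℝ) * ((u ⬝ᵥ v) * (u ⬝ᵥ v) - (u' ⬝ᵥ v) * (u' ⬝ᵥ v))| + |p * q| :=
          abs_sub _ _
      _ ≤ (d / n) * t + (4 * d / n) * t := add_le_add hfirst hpqabs
      _ = (5 * d / n) * t := by ring
  -- glue
  have hc : (0:ℝ) ≤ 5 * d / n := by positivity
  show ‖LinearMap.toContinuousLinearMap (Matrix.toEuclideanLin M)‖ ≤ 5 * d / n
  refine aux_opnorm _ ?_ hc ?_
  · intro x y
    have hsymm := Matrix.isHermitian_iff_isSymmetric.mp hHerm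
    simpa using hsymm x y
  · intro x
    have h2 : ‖x‖ * ‖x‖ = (WithLp.equiv 2 (Fin d → ℝ) x) ⬝ᵥ (WithLp.equiv 2 (Fin d → ℝ) x) := by
      rw [← real_inner_self_eq_norm_mul_norm]
      simp [PiLp.inner_apply, RCLike.inner_apply, dotProduct]
      rw [EuclideanSpace.real_norm_sq_eq]
      simp [sq]
    have h1 : (inner ℝ ((LinearMap.toContinuousLinearMap (Matrix.toEuclideanLin M)) x) x : ℝ)
        = (WithLp.equiv 2 (Fin d → ℝ) x) ⬝ᵥ (M *ᵥ (WithLp.equiv 2 (Fin d → ℝ) x)) := by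
      rw [dotProduct_comm]
      simp [PiLp.inner_apply, RCLike.inner_apply, dotProduct,
        LinearMap.coe_toContinuousLinearMap', Matrix.toEuclideanLin_apply,
        ]
      exact Finset.sum_congr rfl fun _ _ => mul_comm _ _
    rw [h1, h2]
    exact hbound _
end

section
/- Let A be a real symmetric d×d matrix with spectral norm λ_1 = ‖A‖, let u be a unit eigenvector of A with eigenvalue λ > 0, let x be a unit vector, and write sin²θ = 1 − ⟨u, x⟩². Define λ̂ = ‖Ax‖ = √(xᵀA²x). Then λ̂ − λ ≤ (λ_1² − λ²) · sin²θ / (λ̂ + λ). -/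
open scoped RealInnerProductSpace

/-- eigenvalue estimation error. If `A` is real symmetric with spectral
norm `lam₁`, `u` a unit eigenvector with eigenvalue `lam > 0`, `x` a unit vector,
`sin²θ = 1 − ⟨u,x⟩²`, and `lam̂ = ‖Ax‖`, then
`lam̂ − lam ≤ (lam₁² − lam²) sin²θ / (lam̂ + lam)`. -/
theorem eigenvalue_estimate_bound
    (d : ℕ) (A : Matrix (Fin d) (Fin d) ℝ) (hA : A.IsSymm)
    (u x : EuclideanSpace ℝ (Fin d)) (lam : ℝ) (hlam : 0 < lam)
    (heig : Matrix.toEuclideanCLM (𝕜 := ℝ) A u = lam • u)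
    (hu : ‖u‖ = 1) (hx : ‖x‖ = 1)
    (lam₁ : ℝ) (hlam₁ : lam₁ = ‖Matrix.toEuclideanCLM (𝕜 := ℝ) A‖)
    (lamHat : ℝ) (hlamHat : lamHat = ‖Matrix.toEuclideanCLM (𝕜 := ℝ) A x‖) :
    lamHat - lam ≤ (lam₁ ^ 2 - lam ^ 2) * (1 - ⟪u, x⟫ ^ 2) / (lamHat + lam) := by
  set T := Matrix.toEuclideanCLM (𝕜 := ℝ) A with hT
  have hherm : A.IsHermitian := by
    rwa [Matrix.IsHermitian, Matrix.conjTranspose_eq_transpose_of_trivial]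
  have hsymm : (Matrix.toEuclideanLin A).IsSymmetric :=
    Matrix.isHermitian_iff_isSymmetric.mp hherm
  have hsym : ∀ y z : EuclideanSpace ℝ (Fin d), ⟪T y, z⟫ = ⟪y, T z⟫ := by
    intro y z
    have := hsymm y z
    simpa [← Matrix.coe_toEuclideanCLM_eq_toEuclideanLin] using this
  set c : ℝ := ⟪u, x⟫ with hc
  set w : EuclideanSpace ℝ (Fin d) := x - c • u with hw
  have huu : ⟪u, u⟫ = 1 := by
    rw [real_inner_self_eq_norm_sq, hu]; norm_num
  have hxx : ⟪x, x⟫ = 1 := by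
    rw [real_inner_self_eq_norm_sq, hx]; norm_num
  have hwu : ⟪u, w⟫ = 0 := by
    rw [hw, inner_sub_right, real_inner_smul_right, huu, mul_one, hc, sub_self]
  have hwnorm : ‖w‖ ^ 2 = 1 - c ^ 2 := by
    have h1 : ⟪w, w⟫ = 1 - c ^ 2 := by
      have hxu : ⟪x, u⟫ = c := by rw [real_inner_comm, hc]
      simp only [hw, inner_sub_left, inner_sub_right, real_inner_smul_left,
        real_inner_smul_right, hxu, hxx, huu, ← hc]
      ring
    rw [← real_inner_self_eq_norm_sq, h1]
  have hTx : T x = (c * lam) • u + T w := by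
    have : x = c • u + w := by simp [hw]
    rw [this, map_add, map_smul, heig, smul_smul]
  have horth : ⟪(c * lam) • u, T w⟫ = 0 := by
    rw [inner_smul_left, ← hsym u w, heig, inner_smul_left, hwu]
    simp
  have hTxsq : ‖T x‖ ^ 2 = (c * lam) ^ 2 + ‖T w‖ ^ 2 := by
    rw [hTx, norm_add_sq_real, horth, norm_smul, hu]
    simp [Real.norm_eq_abs, mul_pow, sq_abs]
  have hTw : ‖T w‖ ≤ lam₁ * ‖w‖ := by
    rw [hlam₁]; exact T.le_opNorm w
  have hTwsq : ‖T w‖ ^ 2 ≤ lam₁ ^ 2 * (1 - c ^ 2) := by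
    have h1 : ‖T w‖ ^ 2 ≤ (lam₁ * ‖w‖) ^ 2 := pow_le_pow_left₀ (norm_nonneg _) hTw 2
    calc ‖T w‖ ^ 2 ≤ (lam₁ * ‖w‖) ^ 2 := h1
      _ = lam₁ ^ 2 * (1 - c ^ 2) := by rw [mul_pow, hwnorm]
  have hlamHatsq : lamHat ^ 2 ≤ lam ^ 2 * c ^ 2 + lam₁ ^ 2 * (1 - c ^ 2) := by
    rw [hlamHat, hTxsq]
    nlinarith
  have hlamHatnn : 0 ≤ lamHat := hlamHat ▸ norm_nonneg _
  have hpos : 0 < lamHat + lam := by linarith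
  rw [le_div_iff₀ hpos]
  nlinarith [sq_nonneg c]
end

section
/- Let m, N ≥ 1, δ > 0, and let W and W′ be real m×N matrices with |W_{rk} − W′_{rk}| ≤ δ for all entries. Let b, Δ ∈ ℝ^m, set b̂ = b + Δ, and let b̂′ ∈ ℝ^m satisfy ‖b̂′ − b̂‖_1 ≤ mδ + ‖Δ‖_1. Suppose u′ ∈ ℝ^N is a probability vector (u′ ⪰ 0, ‖u′‖_1 = 1) with W u′ = b, and let u* be any probability vector minimizing ‖W′u − b̂′‖_1 over all probability vectors u. Then for every vector b̃ ∈ ℝ^m and every c ∈ ℝ^m, |⟨c, b̃ − b⟩| ≤ ( ‖b̃ − W u*‖_1 + 4mδ + 4‖Δ‖_1 ) · ‖c‖_∞. -/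
open scoped BigOperators

/-- stability estimate for the linear program
`min_u ‖W′u − b̂′‖₁` over the probability simplex. For any vectors `b̃` and `c`,
`|⟨c, b̃ − b⟩| ≤ (‖b̃ − W u*‖₁ + 4mδ + 4‖Δ‖₁) · ‖c‖_∞`. -/
theorem lp_stability_bound
    (m N : ℕ) (hm : 1 ≤ m) (hN : 1 ≤ N) (δ : ℝ) (hδ : 0 < δ)
    (W W' : Matrix (Fin m) (Fin N) ℝ) (hWW' : ∀ r k, |W r k - W' r k| ≤ δ)
    (b Δ bhat : Fin m → ℝ) (hbhat : bhat = b + Δ)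
    (bhat' : Fin m → ℝ)
    (hbhat' : (∑ r, |bhat' r - bhat r|) ≤ m * δ + ∑ r, |Δ r|)
    (u' : Fin N → ℝ) (hu'nonneg : ∀ k, 0 ≤ u' k) (hu'sum : (∑ k, u' k) = 1)
    (hWu' : W.mulVec u' = b)
    (ustar : Fin N → ℝ) (hustarnonneg : ∀ k, 0 ≤ ustar k)
    (hustarsum : (∑ k, ustar k) = 1)
    (hmin : ∀ u : Fin N → ℝ, (∀ k, 0 ≤ u k) → (∑ k, u k) = 1 →
      (∑ r, |W'.mulVec ustar r - bhat' r|) ≤ ∑ r, |W'.mulVec u r - bhat' r|)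
    (btilde c : Fin m → ℝ) :
    |∑ r, c r * (btilde r - b r)| ≤
      ((∑ r, |btilde r - W.mulVec ustar r|) + 4 * m * δ + 4 * ∑ r, |Δ r|) *
        (⨆ r : Fin m, |c r|) := by
  set S := ⨆ r : Fin m, |c r| with hS
  have hSb : ∀ r, |c r| ≤ S :=
    fun r => le_ciSup (f := fun r => |c r|) (Set.Finite.bddAbove (Set.finite_range _)) r
  have hS0 : 0 ≤ S := le_trans (abs_nonneg _) (hSb ⟨0, hm⟩)
  set D := ∑ r, |Δ r| with hD
  -- key estimate: for a probability vector u, ∑ r |Wu r - W'u r| ≤ m δ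
  have key : ∀ u : Fin N → ℝ, (∀ k, 0 ≤ u k) → (∑ k, u k) = 1 →
      (∑ r, |W.mulVec u r - W'.mulVec u r|) ≤ m * δ := by
    intro u hu hsum
    have h1 : ∀ r, |W.mulVec u r - W'.mulVec u r| ≤ δ := by
      intro r
      have he : W.mulVec u r - W'.mulVec u r = ∑ k, (W r k - W' r k) * u k := by
        simp [Matrix.mulVec, dotProduct, sub_mul, Finset.sum_sub_distrib]
      rw [he]
      calc |∑ k, (W r k - W' r k) * u k| ≤ ∑ k, |(W r k - W' r k) * u k| :=
            Finset.abs_sum_le_sum_abs _ _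
        _ ≤ ∑ k, δ * u k := by
            refine Finset.sum_le_sum fun k _ => ?_
            rw [abs_mul, abs_of_nonneg (hu k)]
            exact mul_le_mul_of_nonneg_right (hWW' r k) (hu k)
        _ = δ := by rw [← Finset.mul_sum, hsum, mul_one]
    calc (∑ r, |W.mulVec u r - W'.mulVec u r|) ≤ ∑ _r : Fin m, δ :=
          Finset.sum_le_sum fun r _ => h1 r
      _ = m * δ := by simp [mul_comm]
  have hbhatb : (∑ r, |bhat r - b r|) = D := by
    subst hbhat; simp [hD]
  -- minimizer value bound
  have hmin' : (∑ r, |W'.mulVec ustar r - bhat' r|) ≤ 2 * (m * δ) + 2 * D := by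
    have h0 := hmin u' hu'nonneg hu'sum
    have h1 : (∑ r, |W'.mulVec u' r - bhat' r|) ≤ (m * δ) + D + (m * δ + D) := by
      have htri : ∀ r, |W'.mulVec u' r - bhat' r| ≤
          |W.mulVec u' r - W'.mulVec u' r| + |bhat r - b r| + |bhat' r - bhat r| := by
        intro r
        have hb : W.mulVec u' r = b r := by rw [hWu']
        have e : W'.mulVec u' r - bhat' r =
            -(W.mulVec u' r - W'.mulVec u' r) + -(bhat r - b r) + -(bhat' r - bhat r) := by
          rw [hb]; ring
        rw [e]
        calc |_| ≤ |-(W.mulVec u' r - W'.mulVec u' r)| + |-(bhat r - b r)|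
              + |-(bhat' r - bhat r)| := abs_add_three _ _ _
          _ = _ := by rw [abs_neg, abs_neg, abs_neg]
      calc (∑ r, |W'.mulVec u' r - bhat' r|)
          ≤ ∑ r, (|W.mulVec u' r - W'.mulVec u' r| + |bhat r - b r| + |bhat' r - bhat r|) :=
            Finset.sum_le_sum fun r _ => htri r
        _ = (∑ r, |W.mulVec u' r - W'.mulVec u' r|) + (∑ r, |bhat r - b r|)
              + (∑ r, |bhat' r - bhat r|) := by
            rw [Finset.sum_add_distrib, Finset.sum_add_distrib]
        _ ≤ (m * δ) + D + (m * δ + D) := by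
            rw [hbhatb]
            linarith [key u' hu'nonneg hu'sum, hbhat']
    linarith
  -- total bound on ∑ |W ustar - b|
  have htotal : (∑ r, |W.mulVec ustar r - b r|) ≤ 4 * (m * δ) + 4 * D := by
    have htri : ∀ r, |W.mulVec ustar r - b r| ≤
        |W.mulVec ustar r - W'.mulVec ustar r| + |W'.mulVec ustar r - bhat' r|
          + |bhat' r - bhat r| + |bhat r - b r| := by
      intro r
      have : W.mulVec ustar r - b r =
          (W.mulVec ustar r - W'.mulVec ustar r) + (W'.mulVec ustar r - bhat' r)
            + (bhat' r - bhat r) + (bhat r - b r) := by ring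
      rw [this]
      calc |_| ≤ |(W.mulVec ustar r - W'.mulVec ustar r) + (W'.mulVec ustar r - bhat' r)
            + (bhat' r - bhat r)| + |bhat r - b r| := abs_add_le _ _
        _ ≤ |(W.mulVec ustar r - W'.mulVec ustar r) + (W'.mulVec ustar r - bhat' r)|
            + |bhat' r - bhat r| + |bhat r - b r| := by
            linarith [abs_add_le ((W.mulVec ustar r - W'.mulVec ustar r)
              + (W'.mulVec ustar r - bhat' r)) (bhat' r - bhat r)]
        _ ≤ |W.mulVec ustar r - W'.mulVec ustar r| + |W'.mulVec ustar r - bhat' r|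
            + |bhat' r - bhat r| + |bhat r - b r| := by
            linarith [abs_add_le (W.mulVec ustar r - W'.mulVec ustar r)
              (W'.mulVec ustar r - bhat' r)]
    calc (∑ r, |W.mulVec ustar r - b r|)
        ≤ ∑ r, (|W.mulVec ustar r - W'.mulVec ustar r| + |W'.mulVec ustar r - bhat' r|
            + |bhat' r - bhat r| + |bhat r - b r|) := Finset.sum_le_sum fun r _ => htri r
      _ = (∑ r, |W.mulVec ustar r - W'.mulVec ustar r|)
            + (∑ r, |W'.mulVec ustar r - bhat' r|)
            + (∑ r, |bhat' r - bhat r|) + (∑ r, |bhat r - b r|) := by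
          simp [Finset.sum_add_distrib]
      _ ≤ 4 * (m * δ) + 4 * D := by
          have h1 := key ustar hustarnonneg hustarsum
          have h2 := hmin'
          have h3 := hbhat'
          rw [hbhatb]
          linarith
  -- final chain
  calc |∑ r, c r * (btilde r - b r)|
      ≤ ∑ r, |c r * (btilde r - b r)| := Finset.abs_sum_le_sum_abs _ _
    _ ≤ ∑ r, S * |btilde r - b r| := by
        refine Finset.sum_le_sum fun r _ => ?_
        rw [abs_mul]
        exact mul_le_mul_of_nonneg_right (hSb r) (abs_nonneg _)
    _ = S * ∑ r, |btilde r - b r| := by rw [Finset.mul_sum]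
    _ ≤ S * ((∑ r, |btilde r - W.mulVec ustar r|) + (∑ r, |W.mulVec ustar r - b r|)) := by
        refine mul_le_mul_of_nonneg_left ?_ hS0
        rw [← Finset.sum_add_distrib]
        exact Finset.sum_le_sum fun r _ => abs_sub_le _ _ _
    _ ≤ S * ((∑ r, |btilde r - W.mulVec ustar r|) + 4 * ↑m * δ + 4 * D) := by
        refine mul_le_mul_of_nonneg_left ?_ hS0
        have := htotal
        linarith
    _ = ((∑ r, |btilde r - W.mulVec ustar r|) + 4 * ↑m * δ + 4 * ∑ r, |Δ r|) * S := by
        rw [← hD]; ring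
end
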